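/- Let G be a real symmetric matrix indexed by a finite type and let G⁺ be its stoquastic. Then for all indices i, j, |(exp(G))ᵢⱼ| ≤ (exp(G⁺))ᵢⱼ, where exp denotes the matrix exponential. -/

import Mathlib

open Matrix Finset

/-- The stoquastic of a real matrix: keep the diagonal, take absolute values off-diagonal. -/
def stoq {n : Type*} [DecidableEq n] (A : Matrix n n ℝ) : Matrix n n ℝ :=
  fun i j => if i = j then A i j else |A i j|

lemma stoq_isHermitian {n : Type*} [Fintype n] [DecidableEq n] {A : Matrix n n ℝ}
    (hA : A.IsHermitian) : (stoq A).IsHermitian := by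
  ext i j
  by_cases h : i = j
  · subst h; simp [stoq, Matrix.conjTranspose_apply]
  · have := hA.apply i j
    simp only [Matrix.conjTranspose_apply, stoq, h, Ne.symm h, if_false, star_trivial] at *
    rw [this]

lemma pow_entry_nonneg {n : Type*} [Fintype n] [DecidableEq n] {B : Matrix n n ℝ}
    (hB : ∀ i j, 0 ≤ B i j) : ∀ (k : ℕ) (i j : n), 0 ≤ (B ^ k) i j := by
  intro k
  induction k with
  | zero => intro i j; by_cases h : i = j <;> simp [h, Matrix.one_apply]
  | succ k ih =>
    intro i j
    rw [pow_succ, Matrix.mul_apply]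
    exact Finset.sum_nonneg fun l _ => mul_nonneg (ih i l) (hB l j)

lemma abs_pow_entry_le {n : Type*} [Fintype n] [DecidableEq n] {A B : Matrix n n ℝ}
    (h : ∀ i j, |A i j| ≤ B i j) : ∀ (k : ℕ) (i j : n), |(A ^ k) i j| ≤ (B ^ k) i j := by
  have hB : ∀ i j, 0 ≤ B i j := fun i j => (abs_nonneg _).trans (h i j)
  intro k
  induction k with
  | zero => intro i j; by_cases hij : i = j <;> simp [hij, Matrix.one_apply]
  | succ k ih =>
    intro i j
    rw [pow_succ, pow_succ, Matrix.mul_apply, Matrix.mul_apply]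
    calc |∑ l, (A ^ k) i l * A l j| ≤ ∑ l, |(A ^ k) i l * A l j| := Finset.abs_sum_le_sum_abs _ _
      _ ≤ ∑ l, (B ^ k) i l * B l j := by
          refine Finset.sum_le_sum fun l _ => ?_
          rw [abs_mul]
          exact mul_le_mul (ih i l) (h l j) (abs_nonneg _)
            (pow_entry_nonneg hB k i l)

/-- Entrywise exponential comparison. -/
lemma abs_exp_entry_le {n : Type*} [Fintype n] [DecidableEq n] {A B : Matrix n n ℝ}
    (h : ∀ i j, |A i j| ≤ B i j) (i j : n) :
    |NormedSpace.exp A i j| ≤ NormedSpace.exp B i j := by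
  letI : NormedRing (Matrix n n ℝ) := Matrix.linftyOpNormedRing
  letI : NormedAlgebra ℝ (Matrix n n ℝ) := Matrix.linftyOpNormedAlgebra
  have hA : HasSum (fun k : ℕ => (((Nat.factorial k) : ℝ)⁻¹ • A ^ k)) (NormedSpace.exp A) :=
    NormedSpace.exp_series_hasSum_exp' A
  have hBsum : HasSum (fun k : ℕ => (((Nat.factorial k) : ℝ)⁻¹ • B ^ k)) (NormedSpace.exp B) :=
    NormedSpace.exp_series_hasSum_exp' B
  have hA' : HasSum (fun k : ℕ => (((Nat.factorial k) : ℝ)⁻¹ • A ^ k) i j) (NormedSpace.exp A i j) :=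
    ((Pi.hasSum.mp ((Pi.hasSum.mp hA) i)) j)
  have hB' : HasSum (fun k : ℕ => (((Nat.factorial k) : ℝ)⁻¹ • B ^ k) i j) (NormedSpace.exp B i j) :=
    ((Pi.hasSum.mp ((Pi.hasSum.mp hBsum) i)) j)
  have key : ∀ k : ℕ, |(((Nat.factorial k) : ℝ)⁻¹ • A ^ k) i j| ≤ (((Nat.factorial k) : ℝ)⁻¹ • B ^ k) i j := by
    intro k
    simp only [Matrix.smul_apply, smul_eq_mul, abs_mul, abs_inv, Nat.abs_cast]
    exact mul_le_mul_of_nonneg_left (abs_pow_entry_le h k i j)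
      (inv_nonneg.mpr (Nat.cast_nonneg _))
  have habs : Summable fun k : ℕ => |(((Nat.factorial k) : ℝ)⁻¹ • A ^ k) i j| :=
    Summable.of_nonneg_of_le (fun _ => abs_nonneg _) key hB'.summable
  calc |NormedSpace.exp A i j| = |∑' k : ℕ, (((Nat.factorial k) : ℝ)⁻¹ • A ^ k) i j| := by
        rw [hA'.tsum_eq]
    _ ≤ ∑' k : ℕ, |(((Nat.factorial k) : ℝ)⁻¹ • A ^ k) i j| := by
        have habs' : Summable fun k : ℕ => ‖(((Nat.factorial k) : ℝ)⁻¹ • A ^ k) i j‖ := by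
          simp only [Real.norm_eq_abs]; exact habs
        have h := norm_tsum_le_tsum_norm habs'
        simp only [Real.norm_eq_abs] at h
        exact h
    _ ≤ ∑' k : ℕ, (((Nat.factorial k) : ℝ)⁻¹ • B ^ k) i j := Summable.tsum_le_tsum key habs hB'.summable
    _ = NormedSpace.exp B i j := hB'.tsum_eq

/-- **Entrywise exponential bound by the stoquastic.** For a real symmetric matrix `G` and
its stoquastic `G⁺`, every entry satisfies `|(exp G)ᵢⱼ| ≤ (exp G⁺)ᵢⱼ`. -/
theorem abs_exp_le_exp_stoq {n : Type*} [Fintype n] [DecidableEq n]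
    {G : Matrix n n ℝ} (hG : G.IsHermitian) :
    ∀ i j, |NormedSpace.exp G i j| ≤ NormedSpace.exp (stoq G) i j := by
  intro i j
  set c : ℝ := ∑ k, |G k k| with hc
  have hck : ∀ k : n, |G k k| ≤ c := fun k =>
    Finset.single_le_sum (f := fun k => |G k k|) (fun _ _ => abs_nonneg _) (Finset.mem_univ k)
  set A : Matrix n n ℝ := G + c • (1 : Matrix n n ℝ) with hA
  set B : Matrix n n ℝ := stoq G + c • (1 : Matrix n n ℝ) with hB
  have hcomp : ∀ i j, |A i j| ≤ B i j := by
    intro i j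
    by_cases hij : i = j
    · subst hij
      simp only [hA, hB, Matrix.add_apply, Matrix.smul_apply, Matrix.one_apply_eq, smul_eq_mul,
        mul_one, stoq, if_pos rfl, if_true]
      rw [abs_of_nonneg (by linarith [(abs_le.mp (hck i)).1])]
    · simp only [hA, hB, Matrix.add_apply, Matrix.smul_apply, Matrix.one_apply_ne hij,
        smul_eq_mul, mul_zero, add_zero, stoq, if_neg hij]
      exact le_rfl
  have hmain := abs_exp_entry_le hcomp i j
  -- rewrite exp A and exp B via exp of commuting sum
  have hcomm : ∀ M : Matrix n n ℝ, Commute M (c • (1 : Matrix n n ℝ)) := fun M => by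
    simp [Commute, SemiconjBy, Matrix.mul_smul, Matrix.smul_mul]
  have hdiag : NormedSpace.exp (c • (1 : Matrix n n ℝ))
      = Real.exp c • (1 : Matrix n n ℝ) := by
    have h1 : c • (1 : Matrix n n ℝ) = Matrix.diagonal (fun _ : n => c) := by
      ext a b; by_cases h : a = b <;> simp [h, Matrix.one_apply]
    have h2 : Real.exp c • (1 : Matrix n n ℝ) = Matrix.diagonal (fun _ : n => Real.exp c) := by
      ext a b; by_cases h : a = b <;> simp [h, Matrix.one_apply]
    rw [h1, h2, Matrix.exp_diagonal]
    have h3 : (NormedSpace.exp fun _ : n => c) = fun _ : n => Real.exp c := by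
      funext k
      rw [Pi.coe_exp, Real.exp_eq_exp_ℝ]
    rw [h3]
  have hexpA : NormedSpace.exp A = Real.exp c • NormedSpace.exp G := by
    rw [hA, Matrix.exp_add_of_commute _ _ (hcomm G), hdiag]
    rw [Matrix.mul_smul, Matrix.mul_one]
  have hexpB : NormedSpace.exp B = Real.exp c • NormedSpace.exp (stoq G) := by
    rw [hB, Matrix.exp_add_of_commute _ _ (hcomm (stoq G)), hdiag]
    rw [Matrix.mul_smul, Matrix.mul_one]
  rw [hexpA, hexpB] at hmain
  simp only [Matrix.smul_apply, smul_eq_mul, abs_mul, abs_of_pos (Real.exp_pos c)] at hmain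
  exact le_of_mul_le_mul_left hmain (Real.exp_pos c)
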